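/- arXiv:2005.13657 — 3 statements merged into one kernel-verified Lean document; each statement's English description precedes it below -/
import Mathlib

section
/- Let a < b be real numbers, let z : [a,b] → ℝ be continuous on [a,b] and differentiable on (a,b) with |z(x)| ≤ 1 for all x ∈ [a,b], and let g : (a,b) → ℝ be continuous with z'(x) = -g(x) and g(x) ≥ 2/(b-a) for every x ∈ (a,b). Then g(x) = 2/(b-a) for every x ∈ (a,b). -/
/-- Rigidity at the critical parameter: if `z` is continuous on `[a,b]`, differentiable
on `(a,b)` with `|z| ≤ 1` on `[a,b]`, and `z' = -g` on `(a,b)` for a continuous `g`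
with `g ≥ 2/(b-a)`, then `g ≡ 2/(b-a)` on `(a,b)`. -/
theorem gelfand_one_dim_rigidity (a b : ℝ) (hab : a < b) (z g : ℝ → ℝ)
    (hzc : ContinuousOn z (Set.Icc a b))
    (hzb : ∀ x ∈ Set.Icc a b, |z x| ≤ 1)
    (hderiv : ∀ x ∈ Set.Ioo a b, HasDerivAt z (-(g x)) x)
    (hgc : ContinuousOn g (Set.Ioo a b))
    (hg : ∀ x ∈ Set.Ioo a b, 2 / (b - a) ≤ g x) :
    ∀ x ∈ Set.Ioo a b, g x = 2 / (b - a) := by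
  set c : ℝ := 2 / (b - a) with hc
  have hba : (0:ℝ) < b - a := by linarith
  have hcb : c * (b - a) = 2 := div_mul_cancel₀ 2 (ne_of_gt hba)
  set w : ℝ → ℝ := fun x => z x + c * (x - a) with hw
  have hwderiv : ∀ x ∈ Set.Ioo a b, HasDerivAt w (c - g x) x := by
    intro x hx
    have h1 : HasDerivAt (fun x : ℝ => c * (x - a)) c x := by
      simpa using ((hasDerivAt_id x).sub_const a).const_mul c
    have := (hderiv x hx).add h1
    rw [show c - g x = -(g x) + c by ring]
    exact this
  have hwc : ContinuousOn w (Set.Icc a b) :=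
    hzc.add (Continuous.continuousOn (by continuity))
  have hwanti : AntitoneOn w (Set.Icc a b) := by
    apply antitoneOn_of_deriv_nonpos (convex_Icc a b) hwc
    · intro x hx
      rw [interior_Icc] at hx
      exact (hwderiv x hx).differentiableAt.differentiableWithinAt
    · intro x hx
      rw [interior_Icc] at hx
      rw [(hwderiv x hx).deriv]
      have := hg x hx
      linarith
  have hma : a ∈ Set.Icc a b := Set.left_mem_Icc.mpr hab.le
  have hmb : b ∈ Set.Icc a b := Set.right_mem_Icc.mpr hab.le
  have hwb : w b = z b + 2 := by simp [w, hcb]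
  have hwa : w a = z a := by simp [w]
  have hzaa := abs_le.mp (hzb a hma)
  have hzbb := abs_le.mp (hzb b hmb)
  have hwab : w a = w b := by
    have h1 : w b ≤ w a := hwanti hma hmb hab.le
    rw [hwa, hwb] at h1 ⊢
    linarith [hzaa.2, hzbb.1]
  have hconst : ∀ x ∈ Set.Icc a b, w x = w a := by
    intro x hx
    have h1 : w x ≤ w a := hwanti hma hx hx.1
    have h2 : w b ≤ w x := hwanti hx hmb hx.2
    linarith [hwab ▸ h2]
  intro x hx
  have hev : w =ᶠ[nhds x] fun _ => w a := by
    filter_upwards [Ioo_mem_nhds hx.1 hx.2] with y hy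
    exact hconst y (Set.mem_Icc.mpr ⟨hy.1.le, hy.2.le⟩)
  have h0 : HasDerivAt w 0 x := by
    have : HasDerivAt (fun _ : ℝ => w a) 0 x := hasDerivAt_const x _
    exact this.congr_of_eventuallyEq hev
  have := (hwderiv x hx).unique h0
  linarith
end

section
/- Let f : [0,∞) → ℝ be continuously differentiable and increasing with f(0) > 0, and suppose there exists δ > 0 such that for every q ∈ (0,δ) one has lim_{s→∞} f(s)/s^q = ∞. Then lim_{p→1⁺} sup_{α ∈ [0,∞)} α^{p-1}/f(α) = 1/f(0). -/
open Filter

private lemma aux_rpow_tendsto {t : ℝ} (ht : 0 < t) :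
    Tendsto (fun p : ℝ => t ^ (p - 1)) (nhdsWithin 1 (Set.Ioi 1)) (nhds 1) := by
  have h0 : Tendsto (fun p : ℝ => p - 1) (nhdsWithin 1 (Set.Ioi 1)) (nhds 0) := by
    have h : Tendsto (fun p : ℝ => p - 1) (nhds (1 : ℝ)) (nhds 0) := by
      have h' := (continuous_sub_right (1:ℝ)).tendsto 1
      simpa using h'
    exact h.mono_left nhdsWithin_le_nhds
  have hc : ContinuousAt (fun x : ℝ => t ^ x) 0 :=
    Real.continuousAt_const_rpow ht.ne'
  have h2 := hc.tendsto.comp h0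
  simpa [Function.comp_def, Real.rpow_zero] using h2

/-- If `f` is `C¹`, increasing on `[0,∞)` with `f 0 > 0`, and `f(s)/s^q → ∞` for all small
`q > 0`, then `sup_{α ≥ 0} α^(p-1)/f(α) → 1/f(0)` as `p → 1⁺`. -/
theorem limit_sup_quotient (f : ℝ → ℝ)
    (hf : ContDiffOn ℝ 1 f (Set.Ici 0))
    (hmono : StrictMonoOn f (Set.Ici 0))
    (hf0 : 0 < f 0)
    (δ : ℝ) (hδ : 0 < δ)
    (hsuper : ∀ q ∈ Set.Ioo (0 : ℝ) δ,
      Tendsto (fun s => f s / s ^ q) atTop atTop) :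
    Tendsto (fun p : ℝ => sSup ((fun α => α ^ (p - 1) / f α) '' Set.Ici 0))
      (nhdsWithin 1 (Set.Ioi 1)) (nhds (1 / f 0)) := by
  set c := f 0 with hcdef
  have hcpos : 0 < c := hf0
  set q := δ / 2 with hqdef
  have hq0 : 0 < q := by positivity
  have hqδ : q < δ := by simp only [hqdef]; linarith
  have hfle : ∀ α : ℝ, 0 ≤ α → c ≤ f α := fun α hα =>
    hmono.monotoneOn Set.self_mem_Ici hα hα
  -- choose M with f s ≥ c s^q for s ≥ M
  have hev := (hsuper q ⟨hq0, hqδ⟩).eventually_ge_atTop c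
  rw [Filter.eventually_atTop] at hev
  obtain ⟨M0, hM0⟩ := hev
  set M := max M0 1 with hMdef
  have hM1 : (1:ℝ) ≤ M := le_max_right _ _
  have hMpos : (0:ℝ) < M := lt_of_lt_of_le one_pos hM1
  -- key bound
  have key : ∀ p : ℝ, p ∈ Set.Ioo 1 (1 + q) →
      ∀ x ∈ (fun α => α ^ (p - 1) / f α) '' Set.Ici 0, x ≤ M ^ (p - 1) / c := by
    rintro p ⟨hp1, hp2⟩ x ⟨α, hα, rfl⟩
    have hα0 : (0:ℝ) ≤ α := hα
    have hp0 : (0:ℝ) ≤ p - 1 := by linarith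
    have hfα : 0 < f α := lt_of_lt_of_le hcpos (hfle α hα0)
    have hM1le : (1:ℝ) ≤ M ^ (p - 1) := by
      have h := Real.rpow_le_rpow zero_le_one hM1 hp0
      simpa using h
    by_cases hcase : α ≤ M
    · have h1 : α ^ (p - 1) ≤ M ^ (p - 1) := Real.rpow_le_rpow hα0 hcase hp0
      exact div_le_div₀ (by positivity) h1 hcpos (hfle α hα0)
    · push_neg at hcase
      have h1α : (1:ℝ) ≤ α := le_trans hM1 hcase.le
      have h1 : α ^ (p - 1) ≤ α ^ q :=
        Real.rpow_le_rpow_of_exponent_le h1α (by linarith)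
      have hαq : 0 < α ^ q := Real.rpow_pos_of_pos (by linarith) q
      have h2 : c * α ^ q ≤ f α := by
        have h := hM0 α (le_trans (le_max_left _ _) hcase.le)
        exact (le_div_iff₀ hαq).1 h
      have h3 : α ^ q / f α ≤ 1 / c := by
        rw [div_le_div_iff₀ hfα hcpos]
        nlinarith
      calc α ^ (p - 1) / f α ≤ α ^ q / f α := by
            exact (div_le_div_iff_of_pos_right hfα).2 h1
        _ ≤ 1 / c := h3
        _ ≤ M ^ (p - 1) / c := by
            exact (div_le_div_iff_of_pos_right hcpos).2 hM1le
  have hbdd : ∀ p ∈ Set.Ioo (1:ℝ) (1 + q),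
      BddAbove ((fun α => α ^ (p - 1) / f α) '' Set.Ici 0) :=
    fun p hp => ⟨_, fun x hx => key p hp x hx⟩
  have hne : ∀ p : ℝ, ((fun α => α ^ (p - 1) / f α) '' Set.Ici 0).Nonempty :=
    fun p => Set.nonempty_Ici.image _
  have hub : ∀ p ∈ Set.Ioo (1:ℝ) (1 + q),
      sSup ((fun α => α ^ (p - 1) / f α) '' Set.Ici 0) ≤ M ^ (p - 1) / c :=
    fun p hp => csSup_le (hne p) (key p hp)
  have hIoo : ∀ᶠ p in nhdsWithin (1:ℝ) (Set.Ioi 1), p ∈ Set.Ioo (1:ℝ) (1 + q) :=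
    Filter.eventually_of_mem (Ioo_mem_nhdsGT_of_mem ⟨le_refl 1, by linarith⟩)
      (fun _ h => h)
  rw [tendsto_order]
  constructor
  · -- lower bound
    intro a ha
    have hfc : Tendsto (fun t => 1 / f t) (nhdsWithin (0:ℝ) (Set.Ioi 0)) (nhds (1 / c)) := by
      have h1 : Tendsto f (nhdsWithin (0:ℝ) (Set.Ici 0)) (nhds c) :=
        hf.continuousOn 0 Set.self_mem_Ici
      have h2 : Tendsto f (nhdsWithin (0:ℝ) (Set.Ioi 0)) (nhds c) :=
        h1.mono_left (nhdsWithin_mono _ Set.Ioi_subset_Ici_self)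
      exact tendsto_const_nhds.div h2 hcpos.ne'
    have hev1 : ∀ᶠ t in nhdsWithin (0:ℝ) (Set.Ioi 0), a < 1 / f t :=
      (tendsto_order.1 hfc).1 a ha
    obtain ⟨t, hta, ht0⟩ := (hev1.and eventually_mem_nhdsWithin).exists
    have htpos : (0:ℝ) < t := ht0
    have hftpos : 0 < f t := lt_of_lt_of_le hcpos (hfle t htpos.le)
    have htt : Tendsto (fun p : ℝ => t ^ (p - 1) / f t)
        (nhdsWithin 1 (Set.Ioi 1)) (nhds (1 / f t)) :=
      (aux_rpow_tendsto htpos).div_const _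
    have hev2 := (tendsto_order.1 htt).1 a hta
    filter_upwards [hev2, hIoo] with p h1 h2
    have hle : t ^ (p - 1) / f t ≤
        sSup ((fun α => α ^ (p - 1) / f α) '' Set.Ici 0) :=
      le_csSup (hbdd p h2) ⟨t, htpos.le, rfl⟩
    exact lt_of_lt_of_le h1 hle
  · -- upper bound
    intro b hb
    have hten : Tendsto (fun p : ℝ => M ^ (p - 1) / c)
        (nhdsWithin 1 (Set.Ioi 1)) (nhds (1 / c)) :=
      (aux_rpow_tendsto hMpos).div_const _
    have hev2 := (tendsto_order.1 hten).2 b hb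
    filter_upwards [hev2, hIoo] with p h1 h2
    exact lt_of_le_of_lt (hub p h2) h1
end

section
/- Let N ≥ 1 be a natural number, p > 1, λ > 0, let f : [0,∞) → (0,∞) be continuous and increasing, and let v : [0,1] → [0,∞) be continuous and satisfy v(r) = ∫_r^1 ( (λ/t^{N-1}) ∫_0^t s^{N-1} f(v(s)) ds )^{1/(p-1)} dt for every r ∈ [0,1]. Set α = v(0). Then v is nonincreasing (so v(s) ≤ α for all s ∈ [0,1]), and N·(p/(p-1))^{p-1}·α^{p-1}/f(α) ≤ λ ≤ N·(p/(p-1))^{p-1}·α^{p-1}/f(0). -/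
open Set MeasureTheory intervalIntegral

/-- A continuous solution `v` of the radial integral equation
`v r = ∫_r^1 ((λ/t^(N-1)) ∫_0^t s^(N-1) f(v s) ds)^(1/(p-1)) dt` on `[0,1]` is
nonincreasing and, with `α = v 0`, one has
`N (p/(p-1))^(p-1) α^(p-1)/f(α) ≤ λ ≤ N (p/(p-1))^(p-1) α^(p-1)/f(0)`. -/
theorem radial_integral_equation_bounds (N : ℕ) (hN : 1 ≤ N) (p lam : ℝ)
    (hp : 1 < p) (hlam : 0 < lam)
    (f : ℝ → ℝ) (hfc : Continuous f) (hfpos : ∀ s, 0 ≤ s → 0 < f s)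
    (hfmono : MonotoneOn f (Set.Ici 0))
    (v : ℝ → ℝ) (hvc : ContinuousOn v (Set.Icc 0 1))
    (hvnn : ∀ r ∈ Set.Icc (0 : ℝ) 1, 0 ≤ v r)
    (hveq : ∀ r ∈ Set.Icc (0 : ℝ) 1,
      v r = ∫ t in r..(1 : ℝ),
        (lam / t ^ (N - 1) * ∫ s in (0 : ℝ)..t, s ^ (N - 1) * f (v s)) ^ (1 / (p - 1))) :
    AntitoneOn v (Set.Icc 0 1) ∧
    (N : ℝ) * (p / (p - 1)) ^ (p - 1) * (v 0) ^ (p - 1) / f (v 0) ≤ lam ∧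
    lam ≤ (N : ℝ) * (p / (p - 1)) ^ (p - 1) * (v 0) ^ (p - 1) / f 0 := by
  have hp1 : (0:ℝ) < p - 1 := by linarith
  have hq : (0:ℝ) < 1 / (p - 1) := by positivity
  have hNne : N ≠ 0 := by omega
  have hNpos : (0:ℝ) < N := by exact_mod_cast Nat.pos_of_ne_zero hNne
  have h01 : (0:ℝ) ∈ Icc (0:ℝ) 1 := left_mem_Icc.mpr zero_le_one
  have h11 : (1:ℝ) ∈ Icc (0:ℝ) 1 := right_mem_Icc.mpr zero_le_one
  -- the inner integrand
  set h : ℝ → ℝ := fun s => s ^ (N - 1) * f (v s) with hh_def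
  have hhc : ContinuousOn h (Icc 0 1) :=
    (continuous_pow (N - 1)).continuousOn.mul (hfc.comp_continuousOn hvc)
  set I : ℝ → ℝ := fun t => ∫ s in (0:ℝ)..t, h s with hI_def
  have hIc : ContinuousOn I (Icc 0 1) := by
    have : IntegrableOn h (uIcc (0:ℝ) 1) volume := by
      rw [uIcc_of_le zero_le_one]; exact hhc.integrableOn_Icc
    have := continuousOn_primitive_interval this
    rwa [uIcc_of_le zero_le_one] at this
  have hInn : ∀ t ∈ Icc (0:ℝ) 1, 0 ≤ I t := by
    intro t ht
    refine integral_nonneg ht.1 ?_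
    intro s hs
    have hs1 : s ∈ Icc (0:ℝ) 1 := ⟨hs.1, hs.2.trans ht.2⟩
    exact mul_nonneg (pow_nonneg hs.1 _) (hfpos _ (hvnn s hs1)).le
  -- the bound on I in terms of pointwise bounds on f ∘ v
  have hIle : ∀ c : ℝ, (∀ s ∈ Icc (0:ℝ) 1, f (v s) ≤ c) →
      ∀ t ∈ Icc (0:ℝ) 1, I t ≤ c * (t ^ N / N) := by
    intro c hfb t ht
    have hsub : Icc (0:ℝ) t ⊆ Icc 0 1 := Icc_subset_Icc le_rfl ht.2
    have hint1 : IntervalIntegrable h volume 0 t :=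
      (hhc.mono (by rwa [uIcc_of_le ht.1])).intervalIntegrable
    have hint2 : IntervalIntegrable (fun s : ℝ => c * s ^ (N - 1)) volume 0 t :=
      (continuous_const.mul (continuous_pow _)).intervalIntegrable _ _
    have hmono : I t ≤ ∫ s in (0:ℝ)..t, c * s ^ (N - 1) := by
      refine integral_mono_on ht.1 hint1 hint2 ?_
      intro s hs
      have hs1 : s ∈ Icc (0:ℝ) 1 := hsub hs
      have hfle := hfb s hs1
      have hsnn : (0:ℝ) ≤ s ^ (N - 1) := pow_nonneg hs.1 _
      calc s ^ (N - 1) * f (v s) ≤ s ^ (N - 1) * c := by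
            exact mul_le_mul_of_nonneg_left hfle hsnn
        _ = c * s ^ (N - 1) := mul_comm _ _
    have hval : (∫ s in (0:ℝ)..t, c * s ^ (N - 1)) = c * (t ^ N / N) := by
      rw [intervalIntegral.integral_const_mul, integral_pow,
        Nat.sub_add_cancel hN, zero_pow hNne]
      have hcast : ((N - 1 : ℕ) : ℝ) + 1 = (N : ℝ) := by
        rw [Nat.cast_sub hN]; push_cast; ring
      rw [hcast]; ring
    calc I t ≤ ∫ s in (0:ℝ)..t, c * s ^ (N - 1) := hmono
      _ = c * (t ^ N / N) := hval
  have hIge : ∀ c : ℝ, (∀ s ∈ Icc (0:ℝ) 1, c ≤ f (v s)) →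
      ∀ t ∈ Icc (0:ℝ) 1, c * (t ^ N / N) ≤ I t := by
    intro c hfb t ht
    have hsub : Icc (0:ℝ) t ⊆ Icc 0 1 := Icc_subset_Icc le_rfl ht.2
    have hint1 : IntervalIntegrable h volume 0 t :=
      (hhc.mono (by rwa [uIcc_of_le ht.1])).intervalIntegrable
    have hint2 : IntervalIntegrable (fun s : ℝ => c * s ^ (N - 1)) volume 0 t :=
      (continuous_const.mul (continuous_pow _)).intervalIntegrable _ _
    have hmono : (∫ s in (0:ℝ)..t, c * s ^ (N - 1)) ≤ I t := by
      refine integral_mono_on ht.1 hint2 hint1 ?_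
      intro s hs
      have hs1 : s ∈ Icc (0:ℝ) 1 := hsub hs
      have hfle := hfb s hs1
      have hsnn : (0:ℝ) ≤ s ^ (N - 1) := pow_nonneg hs.1 _
      calc c * s ^ (N - 1) = s ^ (N - 1) * c := mul_comm _ _
        _ ≤ s ^ (N - 1) * f (v s) := mul_le_mul_of_nonneg_left hfle hsnn
    have hval : (∫ s in (0:ℝ)..t, c * s ^ (N - 1)) = c * (t ^ N / N) := by
      rw [intervalIntegral.integral_const_mul, integral_pow,
        Nat.sub_add_cancel hN, zero_pow hNne]
      have hcast : ((N - 1 : ℕ) : ℝ) + 1 = (N : ℝ) := by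
        rw [Nat.cast_sub hN]; push_cast; ring
      rw [hcast]; ring
    calc c * (t ^ N / N) = ∫ s in (0:ℝ)..t, c * s ^ (N - 1) := hval.symm
      _ ≤ I t := hmono
  -- b and g
  set b : ℝ → ℝ := fun t => lam / t ^ (N - 1) * I t with hb_def
  set g : ℝ → ℝ := fun t => b t ^ (1 / (p - 1)) with hg_def
  have hgeq : ∀ r ∈ Icc (0:ℝ) 1, v r = ∫ t in r..(1:ℝ), g t := by
    intro r hr
    rw [hveq r hr]
  have hb0 : b 0 = 0 := by
    simp only [hb_def, hI_def, integral_same, mul_zero]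
  have hbnn : ∀ t ∈ Icc (0:ℝ) 1, 0 ≤ b t := by
    intro t ht
    exact mul_nonneg (div_nonneg hlam.le (pow_nonneg ht.1 _)) (hInn t ht)
  have hble : ∀ c : ℝ, 0 ≤ c → (∀ s ∈ Icc (0:ℝ) 1, f (v s) ≤ c) →
      ∀ t ∈ Icc (0:ℝ) 1, b t ≤ lam * c / N * t := by
    intro c hc hfb t ht
    rcases eq_or_lt_of_le ht.1 with heq | htpos
    · rw [← heq, hb0, mul_zero]
    · have hIt := hIle c hfb t ht
      have htne : t ≠ 0 := ne_of_gt htpos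
      have h1 : b t ≤ lam / t ^ (N - 1) * (c * (t ^ N / N)) := by
        refine mul_le_mul_of_nonneg_left hIt ?_
        positivity
      have h2 : lam / t ^ (N - 1) * (c * (t ^ N / N)) = lam * c / N * t := by
        have htN : t ^ N = t ^ (N - 1) * t := by
          rw [← pow_succ, Nat.sub_add_cancel hN]
        rw [htN]
        field_simp
      linarith [h1, h2.le, h2.ge]
  have hbge : ∀ c : ℝ, 0 ≤ c → (∀ s ∈ Icc (0:ℝ) 1, c ≤ f (v s)) →
      ∀ t ∈ Icc (0:ℝ) 1, lam * c / N * t ≤ b t := by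
    intro c hc hfb t ht
    rcases eq_or_lt_of_le ht.1 with heq | htpos
    · rw [← heq, hb0, mul_zero]
    · have hIt := hIge c hfb t ht
      have htne : t ≠ 0 := ne_of_gt htpos
      have h1 : lam / t ^ (N - 1) * (c * (t ^ N / N)) ≤ b t := by
        refine mul_le_mul_of_nonneg_left hIt ?_
        positivity
      have h2 : lam / t ^ (N - 1) * (c * (t ^ N / N)) = lam * c / N * t := by
        have htN : t ^ N = t ^ (N - 1) * t := by
          rw [← pow_succ, Nat.sub_add_cancel hN]
        rw [htN]
        field_simp
      linarith [h1, h2.le, h2.ge]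
  -- a global bound on f ∘ v
  obtain ⟨x₀, hx₀, hmax⟩ := isCompact_Icc.exists_isMaxOn (Set.nonempty_Icc.mpr zero_le_one)
    (hfc.comp_continuousOn hvc)
  set C : ℝ := f (v x₀) with hC_def
  have hCpos : 0 < C := hfpos _ (hvnn _ hx₀)
  have hfleC : ∀ s ∈ Icc (0:ℝ) 1, f (v s) ≤ C := fun s hs => hmax hs
  -- continuity of b, then of g
  have hbc : ContinuousOn b (Icc 0 1) := by
    intro t ht
    rcases eq_or_ne t 0 with rfl | htne
    · have hupper : ∀ᶠ s in nhdsWithin 0 (Icc (0:ℝ) 1), b s ≤ lam * C / N * s :=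
        eventually_mem_nhdsWithin.mono (fun s hs => hble C hCpos.le hfleC s hs)
      have hlower : ∀ᶠ s in nhdsWithin 0 (Icc (0:ℝ) 1), 0 ≤ b s :=
        eventually_mem_nhdsWithin.mono (fun s hs => hbnn s hs)
      have htend : Filter.Tendsto (fun s : ℝ => lam * C / N * s)
          (nhdsWithin 0 (Icc (0:ℝ) 1)) (nhds 0) := by
        have h0 : Filter.Tendsto (fun s : ℝ => lam * C / N * s) (nhds 0) (nhds 0) := by
          have h00 := (Filter.tendsto_id (x := nhds (0:ℝ))).const_mul (lam * C / N)
          rwa [mul_zero] at h00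
        exact h0.mono_left nhdsWithin_le_nhds
      have : Filter.Tendsto b (nhdsWithin 0 (Icc (0:ℝ) 1)) (nhds 0) :=
        squeeze_zero' hlower hupper htend
      rw [ContinuousWithinAt, hb0]
      exact this
    · exact ((continuousAt_const.div ((continuous_pow (N - 1)).continuousAt)
        (pow_ne_zero _ htne)).continuousWithinAt).mul (hIc t ht)
  have hgc : ContinuousOn g (Icc 0 1) := fun t ht =>
    (hbc t ht).rpow_const (Or.inr hq.le)
  have hgnn : ∀ t ∈ Icc (0:ℝ) 1, 0 ≤ g t := fun t ht =>
    Real.rpow_nonneg (hbnn t ht) _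
  have hgint : ∀ a c : ℝ, a ∈ Icc (0:ℝ) 1 → c ∈ Icc (0:ℝ) 1 →
      IntervalIntegrable g volume a c := by
    intro a c ha hc
    exact (hgc.mono (uIcc_subset_Icc ha hc)).intervalIntegrable
  -- antitone
  have hA : AntitoneOn v (Icc 0 1) := by
    intro r1 h1 r2 h2 h12
    rw [hgeq r1 h1, hgeq r2 h2,
      ← integral_add_adjacent_intervals (hgint r1 r2 h1 h2)
        (hgint r2 1 h2 h11)]
    have hnn : 0 ≤ ∫ t in r1..r2, g t := by
      refine integral_nonneg h12 ?_
      intro t ht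
      exact hgnn t ⟨h1.1.trans ht.1, ht.2.trans h2.2⟩
    linarith
  have hα0 : 0 ≤ v 0 := hvnn 0 h01
  have hvle : ∀ s ∈ Icc (0:ℝ) 1, v s ≤ v 0 := fun s hs => hA h01 hs hs.1
  -- the integral of t^(1/(p-1))
  have hJ : (∫ t in (0:ℝ)..1, t ^ (1 / (p - 1))) = (p - 1) / p := by
    rw [integral_rpow (Or.inl (by linarith : (-1:ℝ) < 1 / (p - 1)))]
    rw [Real.one_rpow, Real.zero_rpow (by positivity : (1:ℝ) / (p-1) + 1 ≠ 0)]
    have hpne : p ≠ 0 := by linarith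
    field_simp
    try ring
  have hint_rpow : IntervalIntegrable (fun t : ℝ => t ^ (1 / (p - 1))) volume 0 1 :=
    intervalIntegrable_rpow (Or.inl hq.le)
  -- rpow raising lemmas
  have hqp : (1 / (p - 1)) * (p - 1) = 1 := by field_simp
  have hraise : ∀ x y : ℝ, 0 ≤ x → x ^ (1 / (p - 1)) ≤ y → x ≤ y ^ (p - 1) := by
    intro x y hx hxy
    have := Real.rpow_le_rpow (Real.rpow_nonneg hx _) hxy hp1.le
    rwa [← Real.rpow_mul hx, hqp, Real.rpow_one] at this
  have hraise' : ∀ x y : ℝ, 0 ≤ x → 0 ≤ y → x ≤ y ^ (1 / (p - 1)) → x ^ (p - 1) ≤ y := by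
    intro x y hx hy hxy
    have := Real.rpow_le_rpow hx hxy hp1.le
    rwa [← Real.rpow_mul hy, hqp, Real.rpow_one] at this
  -- generic integral comparison giving the key inequalities
  have hppos : (0:ℝ) < p / (p - 1) := by positivity
  -- lower bound for lam
  refine ⟨hA, ?_, ?_⟩
  · -- N (p/(p-1))^(p-1) α^(p-1) / f α ≤ lam
    set α := v 0 with hα_def
    have hfa : ∀ s ∈ Icc (0:ℝ) 1, f (v s) ≤ f α :=
      fun s hs => hfmono (hvnn s hs) hα0 (hvle s hs)
    set X : ℝ := lam * f α / N with hX_def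
    have hXnn : 0 ≤ X := by
      have := (hfpos α hα0).le
      positivity
    have hgle : ∀ t ∈ Icc (0:ℝ) 1, g t ≤ X ^ (1 / (p - 1)) * t ^ (1 / (p - 1)) := by
      intro t ht
      have hbt := hble (f α) (hfpos α hα0).le hfa t ht
      calc g t = b t ^ (1 / (p - 1)) := rfl
        _ ≤ (X * t) ^ (1 / (p - 1)) :=
            Real.rpow_le_rpow (hbnn t ht) hbt hq.le
        _ = X ^ (1 / (p - 1)) * t ^ (1 / (p - 1)) := Real.mul_rpow hXnn ht.1
    have key1 : α ≤ X ^ (1 / (p - 1)) * ((p - 1) / p) := by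
      have hcomp := integral_mono_on zero_le_one (hgint 0 1 h01 h11)
        (hint_rpow.const_mul _) hgle
      rw [intervalIntegral.integral_const_mul, hJ] at hcomp
      calc α = ∫ t in (0:ℝ)..1, g t := hgeq 0 h01
        _ ≤ X ^ (1 / (p - 1)) * ((p - 1) / p) := hcomp
    have hpne : p ≠ 0 := by linarith
    have hp1ne : p - 1 ≠ 0 := ne_of_gt hp1
    have h1 : α * (p / (p - 1)) ≤ X ^ (1 / (p - 1)) := by
      have hm := mul_le_mul_of_nonneg_right key1 hppos.le
      have he : X ^ (1 / (p - 1)) * ((p - 1) / p) * (p / (p - 1)) = X ^ (1 / (p - 1)) := by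
        field_simp
      rwa [he] at hm
    have h3 : (α * (p / (p - 1))) ^ (p - 1) ≤ X := hraise' _ _ (mul_nonneg hα0 hppos.le) hXnn h1
    have h4 : α ^ (p - 1) * (p / (p - 1)) ^ (p - 1) ≤ X := by
      rwa [Real.mul_rpow hα0 hppos.le] at h3
    rw [div_le_iff₀ (hfpos α hα0)]
    have h5 := (le_div_iff₀ hNpos).mp h4
    calc (N : ℝ) * (p / (p - 1)) ^ (p - 1) * α ^ (p - 1)
        = α ^ (p - 1) * (p / (p - 1)) ^ (p - 1) * N := by ring
      _ ≤ lam * f α := h5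
  · -- lam ≤ N (p/(p-1))^(p-1) α^(p-1) / f 0
    set α := v 0 with hα_def
    have hpne : p ≠ 0 := by linarith
    have hp1ne : p - 1 ≠ 0 := ne_of_gt hp1
    have hf0 : ∀ s ∈ Icc (0:ℝ) 1, f 0 ≤ f (v s) :=
      fun s hs => hfmono (le_refl (0:ℝ)) (hvnn s hs) (hvnn s hs)
    set Y : ℝ := lam * f 0 / N with hY_def
    have hYnn : 0 ≤ Y := by
      have := (hfpos 0 le_rfl).le
      positivity
    have hgge : ∀ t ∈ Icc (0:ℝ) 1, Y ^ (1 / (p - 1)) * t ^ (1 / (p - 1)) ≤ g t := by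
      intro t ht
      have hbt := hbge (f 0) (hfpos 0 le_rfl).le hf0 t ht
      calc Y ^ (1 / (p - 1)) * t ^ (1 / (p - 1)) = (Y * t) ^ (1 / (p - 1)) :=
            (Real.mul_rpow hYnn ht.1).symm
        _ ≤ b t ^ (1 / (p - 1)) :=
            Real.rpow_le_rpow (mul_nonneg hYnn ht.1) hbt hq.le
        _ = g t := rfl
    have key2 : Y ^ (1 / (p - 1)) * ((p - 1) / p) ≤ α := by
      have hcomp := integral_mono_on zero_le_one
        (hint_rpow.const_mul _) (hgint 0 1 h01 h11) hgge
      rw [intervalIntegral.integral_const_mul, hJ] at hcomp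
      calc Y ^ (1 / (p - 1)) * ((p - 1) / p) ≤ ∫ t in (0:ℝ)..1, g t := hcomp
        _ = α := (hgeq 0 h01).symm
    have h1 : Y ^ (1 / (p - 1)) ≤ α * (p / (p - 1)) := by
      have hm := mul_le_mul_of_nonneg_right key2 hppos.le
      have he : Y ^ (1 / (p - 1)) * ((p - 1) / p) * (p / (p - 1)) = Y ^ (1 / (p - 1)) := by
        field_simp
      rwa [he] at hm
    have h3 : Y ≤ (α * (p / (p - 1))) ^ (p - 1) := hraise _ _ hYnn h1
    have h4 : Y ≤ α ^ (p - 1) * (p / (p - 1)) ^ (p - 1) := by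
      rwa [Real.mul_rpow hα0 hppos.le] at h3
    rw [le_div_iff₀ (hfpos 0 le_rfl)]
    have h5 := (div_le_iff₀ hNpos).mp h4
    calc lam * f 0 ≤ α ^ (p - 1) * (p / (p - 1)) ^ (p - 1) * N := h5
      _ = (N : ℝ) * (p / (p - 1)) ^ (p - 1) * α ^ (p - 1) := by ring
end
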